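/- For every integer k ≥ 0, the polynomial T_{4k+2}(x) = ∑_{i=0}^{2k+1} (−1)^i x^{2i}/(2i)! is strictly decreasing on the interval (0, π/2). -/

import Mathlib

lemma term_anti (x : ℝ) (hx : 0 ≤ x) (hx2 : x ^ 2 ≤ 6) (i : ℕ) :
    x ^ (2 * (i + 1) + 1) / (Nat.factorial (2 * (i + 1) + 1)) ≤
      x ^ (2 * i + 1) / (Nat.factorial (2 * i + 1)) := by
  have h1 : 0 ≤ x ^ (2 * i + 1) := pow_nonneg hx _
  have h2 : (0 : ℝ) < (Nat.factorial (2 * i + 1) : ℝ) := by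
    exact_mod_cast Nat.factorial_pos _
  have hfac : (Nat.factorial (2 * (i + 1) + 1) : ℝ) =
      ((2 * i + 3) * (2 * i + 2)) * (Nat.factorial (2 * i + 1) : ℝ) := by
    have : 2 * (i + 1) + 1 = (2 * i + 1) + 1 + 1 := by ring
    rw [this, Nat.factorial_succ, Nat.factorial_succ]
    push_cast
    ring
  have hpow : x ^ (2 * (i + 1) + 1) = x ^ (2 * i + 1) * x ^ 2 := by
    rw [← pow_add]; ring_nf
  rw [hfac, hpow, div_le_div_iff₀ (by positivity) h2]
  have h6 : (6 : ℝ) ≤ (2 * i + 3) * (2 * i + 2) := by nlinarith [Nat.cast_nonneg (α := ℝ) i]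
  nlinarith [mul_le_mul_of_nonneg_left hx2 h1, mul_le_mul_of_nonneg_left h6 h1,
    sq_nonneg x, mul_nonneg h1 (sq_nonneg x)]

lemma even_sum_nonneg (x : ℝ) (hx : 0 ≤ x) (hx2 : x ^ 2 ≤ 6) (k : ℕ) :
    0 ≤ ∑ i ∈ Finset.range (2 * k), (-1 : ℝ) ^ i * x ^ (2 * i + 1) / (Nat.factorial (2 * i + 1)) := by
  induction k with
  | zero => simp
  | succ k ih =>
    have h : 2 * (k + 1) = 2 * k + 1 + 1 := by ring
    rw [h, Finset.sum_range_succ, Finset.sum_range_succ]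
    have he : ((-1 : ℝ)) ^ (2 * k) = 1 := by
      rw [pow_mul]; norm_num
    have ho : ((-1 : ℝ)) ^ (2 * k + 1) = -1 := by
      rw [pow_succ, he]; norm_num
    have hpair := term_anti x hx hx2 (2 * k)
    have heq : 2 * (2 * k) + 1 + 1 + 1 = 2 * (2 * k + 1) + 1 := by ring
    rw [he, ho]
    have : x ^ (2 * (2 * k + 1) + 1) / (Nat.factorial (2 * (2 * k + 1) + 1)) ≤
        x ^ (2 * (2 * k) + 1) / (Nat.factorial (2 * (2 * k) + 1)) := by
      simpa using hpair
    rw [one_mul, neg_one_mul, neg_div, ← sub_eq_add_neg, add_sub_assoc]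
    exact add_nonneg ih (sub_nonneg.mpr this)

lemma odd_sum_pos (x : ℝ) (hx : 0 < x) (hx2 : x ^ 2 ≤ 6) (k : ℕ) :
    0 < ∑ i ∈ Finset.range (2 * k + 1),
        (-1 : ℝ) ^ i * x ^ (2 * i + 1) / (Nat.factorial (2 * i + 1)) := by
  rw [Finset.sum_range_succ]
  have h1 := even_sum_nonneg x hx.le hx2 k
  have he : ((-1 : ℝ)) ^ (2 * k) = 1 := by rw [pow_mul]; norm_num
  have h2 : 0 < (-1 : ℝ) ^ (2 * k) * x ^ (2 * (2 * k) + 1) / (Nat.factorial (2 * (2 * k) + 1)) := by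
    rw [he, one_mul]
    positivity
  linarith

theorem cos_taylor_strictAnti (k : ℕ) :
    StrictAntiOn (fun x : ℝ => ∑ i ∈ Finset.range (2 * k + 2), (-1 : ℝ) ^ i * x ^ (2 * i) / (Nat.factorial (2 * i)))
      (Set.Ioo 0 (Real.pi / 2)) := by
  apply StrictAntiOn.mono (s := Set.Icc 0 (Real.pi / 2)) ?_ Set.Ioo_subset_Icc_self
  apply strictAntiOn_of_deriv_neg (convex_Icc _ _)
  · exact (continuous_finset_sum _ fun i _ => by fun_prop).continuousOn
  · intro x hx
    rw [interior_Icc] at hx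
    have hd : HasDerivAt (fun x : ℝ => ∑ i ∈ Finset.range (2 * k + 2),
        (-1 : ℝ) ^ i * x ^ (2 * i) / (Nat.factorial (2 * i)))
        (∑ i ∈ Finset.range (2 * k + 2),
          (-1 : ℝ) ^ i * ((2 * i : ℕ) * x ^ (2 * i - 1)) / (Nat.factorial (2 * i))) x := by
      apply HasDerivAt.fun_sum
      intro i _
      exact ((hasDerivAt_pow (2 * i) x).const_mul ((-1 : ℝ) ^ i)).div_const _
    rw [hd.deriv]
    have hx2 : x ^ 2 ≤ 6 := by
      nlinarith [Real.pi_lt_d2, hx.1, hx.2, Real.pi_pos]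
    have hsum : ∑ i ∈ Finset.range (2 * k + 2),
        (-1 : ℝ) ^ i * ((2 * i : ℕ) * x ^ (2 * i - 1)) / (Nat.factorial (2 * i)) =
        -∑ i ∈ Finset.range (2 * k + 1),
          (-1 : ℝ) ^ i * x ^ (2 * i + 1) / (Nat.factorial (2 * i + 1)) := by
      rw [Finset.sum_range_succ' _ (2 * k + 1), ← Finset.sum_neg_distrib]
      have h0 : (-1 : ℝ) ^ 0 * ((2 * 0 : ℕ) * x ^ (2 * 0 - 1)) / (Nat.factorial (2 * 0)) = 0 := by
        norm_num
      rw [h0, add_zero]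
      apply Finset.sum_congr rfl
      intro i _
      have he : 2 * (i + 1) = (2 * i + 1) + 1 := by ring
      rw [he, Nat.factorial_succ, pow_succ]
      have : (2 * i + 1) + 1 - 1 = 2 * i + 1 := rfl
      rw [this]
      have hfp : (0 : ℝ) < (Nat.factorial (2 * i + 1) : ℝ) := by
        exact_mod_cast Nat.factorial_pos _
      push_cast
      field_simp
    rw [hsum]
    linarith [odd_sum_pos x hx.1 hx2 k]
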